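/- arXiv:1807.08423 — 2 statements merged into one kernel-verified Lean document; each statement's English description precedes it below -/
import Mathlib

section
/- Let n, Δ ∈ ℕ \ {1} and let t be an integer with 1 ≤ t ≤ n. Then for any rooted tree (T, r) on n vertices with Δ(T) ≤ Δ, there exists a collection 𝒮 of pairwise vertex-disjoint rooted subtrees of T such that: (1) S ⊆ T(x) for every (S, x) ∈ 𝒮; (2) t ≤ |S| ≤ 2Δt for every (S, x) ∈ 𝒮; and (3) ⋃_{(S,x) ∈ 𝒮} V(S) = V(T). -/
open SimpleGraph

namespace ApproxDecomp

/-- The degree of a vertex, as the cardinality of its neighbour set. -/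
noncomputable def deg {V : Type*} (G : SimpleGraph V) (v : V) : ℕ :=
  (G.neighborSet v).ncard

/-- ancestor relation: `v` lies on every path from `r` to `w`. -/
def Anc {n : ℕ} (T : SimpleGraph (Fin n)) (r v w : Fin n) : Prop :=
  ∀ p : T.Walk r w, p.IsPath → v ∈ p.support

section Aux
variable {n : ℕ} {T : SimpleGraph (Fin n)} {r v w u : Fin n}

lemma path_unique (hT : T.IsTree) {a b : Fin n} {p q : T.Walk a b}
    (hp : p.IsPath) (hq : q.IsPath) : p = q := by
  obtain ⟨m, -, hu⟩ := hT.existsUnique_path a b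
  rw [hu p hp, hu q hq]

lemma exists_path (hT : T.IsTree) (a b : Fin n) : ∃ p : T.Walk a b, p.IsPath :=
  (hT.existsUnique_path a b).exists

lemma anc_iff (hT : T.IsTree) {p : T.Walk r w} (hp : p.IsPath) :
    Anc T r v w ↔ v ∈ p.support := by
  refine ⟨fun h => h p hp, fun h q hq => ?_⟩
  rwa [path_unique hT hq hp]

lemma anc_refl : Anc T r w w := fun p _ => p.end_mem_support

lemma anc_root : Anc T r r w := fun p _ => p.start_mem_support

lemma anc_trans (hT : T.IsTree) (h1 : Anc T r v u) (h2 : Anc T r u w) :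
    Anc T r v w := by
  intro p hp
  have hu := h2 p hp
  exact p.support_takeUntil_subset hu (h1 _ (hp.takeUntil hu))

lemma anc_antisymm (hT : T.IsTree) (h1 : Anc T r v w) (h2 : Anc T r w v) : v = w := by
  obtain ⟨p, hp⟩ := exists_path hT r w
  have hv : v ∈ p.support := h1 p hp
  have hqp : (p.takeUntil v hv).IsPath := hp.takeUntil hv
  have hw : w ∈ (p.takeUntil v hv).support := h2 _ hqp
  have heq : (p.takeUntil v hv).takeUntil w hw = p := path_unique hT (hqp.takeUntil hw) hp
  have l1 : ((p.takeUntil v hv).takeUntil w hw).length ≤ (p.takeUntil v hv).length :=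
    Walk.length_takeUntil_le _ hw
  rw [heq] at l1
  have l3 : (p.takeUntil v hv).length + (p.dropUntil v hv).length = p.length := by
    conv_rhs => rw [← p.take_spec hv]
    rw [Walk.length_append]
  exact Walk.eq_of_length_eq_zero (p := p.dropUntil v hv) (by omega)

lemma anc_of_dropUntil (hT : T.IsTree) {p : T.Walk r w} (hp : p.IsPath) (hv : v ∈ p.support)
    (hu : u ∈ (p.dropUntil v hv).support) : Anc T r v u := by
  set A := p.takeUntil v hv with hA
  set d := p.dropUntil v hv with hd
  set B := d.takeUntil u hu with hB
  have hq : (A.append B).IsPath := by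
    rw [Walk.isPath_def, Walk.support_append]
    have hps : p.support = A.support ++ d.support.tail := by
      conv_lhs => rw [← p.take_spec hv]
      rw [Walk.support_append]
    have hds : d.support.tail = B.support.tail ++ (d.dropUntil u hu).support.tail := by
      conv_lhs => rw [← d.take_spec hu]
      rw [Walk.support_append, List.tail_append_of_ne_nil (Walk.support_ne_nil _)]
    have hnd : (A.support ++ d.support.tail).Nodup := hps ▸ hp.support_nodup
    have hsub : (A.support ++ B.support.tail).Sublist (A.support ++ d.support.tail) := by
      rw [List.append_sublist_append_left, hds]
      exact List.sublist_append_left _ _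
    exact hsub.nodup hnd
  have hvq : v ∈ (A.append B).support :=
    Walk.subset_support_append_left _ _ A.end_mem_support
  exact (anc_iff hT hq).mpr hvq

lemma reach_induce {s : Set (Fin n)} :
    ∀ {a b : Fin n} (p : T.Walk a b), (∀ x ∈ p.support, x ∈ s) →
      ∀ (ha : a ∈ s) (hb : b ∈ s), (T.induce s).Reachable ⟨a, ha⟩ ⟨b, hb⟩ := by
  intro a b p
  induction p with
  | nil => exact fun _ ha hb => Reachable.refl _
  | @cons a c b h q ih =>
    intro hs ha hb
    have hc : c ∈ s := hs c (by simp)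
    have h1 : (T.induce s).Adj ⟨a, ha⟩ ⟨c, hc⟩ := by simpa using h
    exact h1.reachable.trans (ih (fun x hx => hs x (by simp [hx])) hc hb)

end Aux


lemma main_lemma {n : ℕ} {T : SimpleGraph (Fin n)} (hT : T.IsTree) (r : Fin n)
    {Δ t : ℕ} (hΔ : 1 ≤ Δ) (ht1 : 1 ≤ t)
    (hdeg : ∀ v, deg T v ≤ Δ) :
    ∀ (N : ℕ) (S : Finset (Fin n)), S.card ≤ N →
      (∀ w ∈ S, ∀ u, Anc T r u w → u ∈ S) → t ≤ S.card →
      ∃ (k : ℕ) (Vs : Fin k → Finset (Fin n)) (x : Fin k → Fin n),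
        (∀ i, Vs i ⊆ S) ∧
        (∀ i j, i ≠ j → Disjoint (Vs i) (Vs j)) ∧
        (∀ i, x i ∈ Vs i) ∧
        (∀ i, (SimpleGraph.induce (↑(Vs i) : Set (Fin n)) T).Connected) ∧
        (∀ i, ∀ v ∈ Vs i, Anc T r (x i) v) ∧
        (∀ i, t ≤ (Vs i).card ∧ (Vs i).card ≤ 2 * Δ * t) ∧
        (∀ v ∈ S, ∃ i, v ∈ Vs i) := by
  intro N
  induction N with
  | zero => intro S h0 _ htS; omega
  | succ N ih =>
    intro S hSN hgood htS
    classical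
    -- the set of descendants of `v` within `S`
    set D : Fin n → Finset (Fin n) := fun v => S.filter (fun w => Anc T r v w) with hD
    have hDsub : ∀ v, D v ⊆ S := fun v => Finset.filter_subset _ _
    have hDmem : ∀ v w, w ∈ D v ↔ (w ∈ S ∧ Anc T r v w) := by
      intro v w; simp [hD, Finset.mem_filter]
    by_cases hsmall : S.card ≤ 2 * Δ * t
    · -- single piece (S, r)
      have hrS : r ∈ S := by
        obtain ⟨w, hw⟩ := Finset.card_pos.mp (show 0 < S.card by omega)
        exact hgood w hw r anc_root
      have hconn : (SimpleGraph.induce (↑S : Set (Fin n)) T).Connected := by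
        rw [connected_iff_exists_forall_reachable]
        refine ⟨⟨r, hrS⟩, ?_⟩
        rintro ⟨a, ha⟩
        obtain ⟨p, hp⟩ := exists_path hT r a
        refine reach_induce p (fun x hx => ?_) hrS ha
        exact hgood a (by simpa using ha) x ((anc_iff hT hp).mpr hx)
      refine ⟨1, fun _ => S, fun _ => r, fun _ => subset_rfl, ?_, fun _ => hrS,
        fun _ => hconn, fun _ v _ => anc_root, fun _ => ⟨htS, hsmall⟩,
        fun v hv => ⟨0, hv⟩⟩
      intro i j hij; exact absurd (Subsingleton.elim i j) hij
    · -- find a minimal subtree of size ≥ t, cut it off, recurse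
      push_neg at hsmall
      have hrS : r ∈ S := by
        obtain ⟨w, hw⟩ := Finset.card_pos.mp (show 0 < S.card by omega)
        exact hgood w hw r anc_root
      have hCand : r ∈ S.filter (fun v => t ≤ (D v).card) := by
        rw [Finset.mem_filter]
        refine ⟨hrS, ?_⟩
        have : D r = S := by
          apply Finset.filter_true_of_mem
          intro w _; exact anc_root
        rw [this]; exact htS
      obtain ⟨v, hvCand, hvmin⟩ := Finset.exists_min_image _ (fun v => (D v).card) ⟨r, hCand⟩
      rw [Finset.mem_filter] at hvCand
      obtain ⟨hvS, hvt⟩ := hvCand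
      set P := D v with hP
      have hvP : v ∈ P := (hDmem v v).mpr ⟨hvS, anc_refl⟩
      -- every child's subtree has size < t
      have hchild : ∀ c, T.Adj v c → c ∈ S → Anc T r v c → (D c).card < t := by
        intro c hadj hcS hvc
        by_contra hle
        push_neg at hle
        have hcCand : c ∈ S.filter (fun v => t ≤ (D v).card) := by
          rw [Finset.mem_filter]; exact ⟨hcS, hle⟩
        have hmin := hvmin c hcCand
        have hss : D c ⊂ P := by
          constructor
          · intro w hw
            rw [hDmem] at hw ⊢
            exact ⟨hw.1, anc_trans hT hvc hw.2⟩
          · intro hsub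
            have hvDc : v ∈ D c := hsub hvP
            rw [hDmem] at hvDc
            exact hadj.ne (anc_antisymm hT hvc hvDc.2)
        exact absurd hmin (by simpa using Finset.card_lt_card hss)
      -- covering P by v and the children subtrees
      set C := (T.neighborFinset v).filter (fun c => c ∈ S ∧ Anc T r v c) with hC
      have hcover : P ⊆ insert v (C.biUnion D) := by
        intro w hw
        rw [hDmem] at hw
        obtain ⟨hwS, hvw⟩ := hw
        by_cases hwv : w = v
        · simp [hwv]
        obtain ⟨p, hp⟩ := exists_path hT r w
        have hv' : v ∈ p.support := hvw p hp
        rcases hdu : p.dropUntil v hv' with _ | ⟨hadj, d'⟩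
        · exact absurd rfl hwv
        · rename_i c
          have hcd : c ∈ (p.dropUntil v hv').support := by
            rw [hdu]; simp
          have hvc : Anc T r v c := anc_of_dropUntil hT hp hv' hcd
          have hcw : Anc T r c w := by
            rw [anc_iff hT hp]
            exact p.support_dropUntil_subset hv' hcd
          have hcS : c ∈ S := hgood w hwS c hcw
          have hcC : c ∈ C := by
            rw [hC, Finset.mem_filter, SimpleGraph.mem_neighborFinset]
            exact ⟨hadj, hcS, hvc⟩
          apply Finset.mem_insert_of_mem
          rw [Finset.mem_biUnion]
          exact ⟨c, hcC, (hDmem c w).mpr ⟨hwS, hcw⟩⟩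
      -- degree bound
      have hCcard : C.card ≤ Δ := by
        refine le_trans (Finset.card_le_card (Finset.filter_subset _ _)) ?_
        have h1 : (T.neighborFinset v).card = (T.neighborSet v).ncard := by
          rw [neighborFinset_def, Set.ncard_eq_toFinset_card']
        rw [h1]; exact hdeg v
      have hPcard : P.card ≤ Δ * t := by
        have h1 : P.card ≤ 1 + (C.biUnion D).card := by
          refine le_trans (Finset.card_le_card hcover) ?_
          exact le_trans (Finset.card_insert_le _ _) (by omega)
        have h2 : (C.biUnion D).card ≤ C.card * (t - 1) := by
          refine le_trans (Finset.card_biUnion_le) ?_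
          calc (∑ c ∈ C, (D c).card) ≤ ∑ c ∈ C, (t - 1) := by
                refine Finset.sum_le_sum ?_
                intro c hcC
                rw [hC, Finset.mem_filter, SimpleGraph.mem_neighborFinset] at hcC
                have := hchild c hcC.1 hcC.2.1 hcC.2.2
                omega
            _ = C.card * (t - 1) := by rw [Finset.sum_const, smul_eq_mul]
        have h3 : C.card * (t - 1) ≤ Δ * (t - 1) := Nat.mul_le_mul_right _ hCcard
        have h4 : 1 + Δ * (t - 1) ≤ Δ * t := by
          obtain ⟨t', rfl⟩ : ∃ t', t = t' + 1 := ⟨t - 1, by omega⟩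
          simp [Nat.mul_succ]; omega
        omega
      -- the rest
      set S' := S \ P with hS'
      have hPS : P ⊆ S := hDsub v
      have hS'card : S'.card = S.card - P.card := Finset.card_sdiff_of_subset hPS
      have h2g : 2 * Δ * t = 2 * (Δ * t) := by ring
      have htS' : t ≤ S'.card := by
        have : t ≤ Δ * t := Nat.le_mul_of_pos_left t (by omega)
        omega
      have hS'N : S'.card ≤ N := by
        have : 1 ≤ P.card := Finset.card_pos.mpr ⟨v, hvP⟩
        omega
      have hS'good : ∀ w ∈ S', ∀ u, Anc T r u w → u ∈ S' := by
        intro w hw u huw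
        rw [hS', Finset.mem_sdiff] at hw ⊢
        refine ⟨hgood w hw.1 u huw, ?_⟩
        intro huP
        rw [hDmem] at huP
        exact hw.2 ((hDmem v w).mpr ⟨hw.1, anc_trans hT huP.2 huw⟩)
      obtain ⟨k', Vs', x', h1', h2', h3', h4', h5', h6', h7'⟩ := ih S' hS'N hS'good htS'
      -- connectivity of P
      have hPconn : (SimpleGraph.induce (↑P : Set (Fin n)) T).Connected := by
        rw [connected_iff_exists_forall_reachable]
        refine ⟨⟨v, hvP⟩, ?_⟩
        rintro ⟨w, hwP⟩
        have hwP' : w ∈ P := by simpa using hwP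
        rw [hDmem] at hwP'
        obtain ⟨p, hp⟩ := exists_path hT r w
        have hv' : v ∈ p.support := hwP'.2 p hp
        refine reach_induce (p.dropUntil v hv') (fun y hy => ?_) hvP hwP
        have hvy : Anc T r v y := anc_of_dropUntil hT hp hv' hy
        have hyw : Anc T r y w := by
          rw [anc_iff hT hp]; exact p.support_dropUntil_subset hv' hy
        exact (hDmem v y).mpr ⟨hgood w hwP'.1 y hyw, hvy⟩
      -- assemble
      refine ⟨k' + 1, Fin.cons P Vs', Fin.cons v x', ?_, ?_, ?_, ?_, ?_, ?_, ?_⟩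
      · intro i
        refine Fin.cases ?_ ?_ i
        · simpa using hPS
        · intro j; simp only [Fin.cons_succ]
          exact (h1' j).trans (Finset.sdiff_subset)
      · have hdisj : ∀ j, Disjoint P (Vs' j) := by
          intro j
          rw [Finset.disjoint_left]
          intro a haP haV
          have := h1' j haV
          rw [hS', Finset.mem_sdiff] at this
          exact this.2 haP
        intro i j hij
        rcases Fin.eq_zero_or_eq_succ i with rfl | ⟨i', rfl⟩ <;>
          rcases Fin.eq_zero_or_eq_succ j with rfl | ⟨j', rfl⟩
        · exact absurd rfl hij
        · simp only [Fin.cons_zero, Fin.cons_succ]; exact hdisj j'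
        · simp only [Fin.cons_zero, Fin.cons_succ]; exact (hdisj i').symm
        · simp only [Fin.cons_succ]
          exact h2' i' j' (fun h => hij (by rw [h]))
      · intro i
        refine Fin.cases ?_ ?_ i
        · simpa using hvP
        · intro j; simpa using h3' j
      · intro i
        refine Fin.cases ?_ ?_ i
        · exact hPconn
        · intro j; exact h4' j
      · intro i
        refine Fin.cases ?_ ?_ i
        · intro w hw
          simp only [Fin.cons_zero] at hw ⊢
          exact ((hDmem v w).mp hw).2
        · intro j; simpa using h5' j
      · intro i
        refine Fin.cases ?_ ?_ i
        · simp only [Fin.cons_zero]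
          refine ⟨hvt, ?_⟩
          have h2g : 2 * Δ * t = 2 * (Δ * t) := by ring
          omega
        · intro j; simpa using h6' j
      · intro w hwS
        by_cases hwP : w ∈ P
        · exact ⟨0, by simpa using hwP⟩
        · obtain ⟨j, hj⟩ := h7' w (by rw [hS', Finset.mem_sdiff]; exact ⟨hwS, hwP⟩)
          exact ⟨j.succ, by simpa using hj⟩


/-- Proposition 2.9: a rooted bounded-degree tree can be partitioned into
vertex-disjoint rooted subtrees of size between `t` and `2Δt`, each contained
in the set of descendants of its root. Here `x i ∈ p.support` for every path
`p` from `r` to `v` expresses that `v` lies in `T(x i)`, i.e. `v` is a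
descendant of `x i` with respect to the root `r`. -/
theorem rooted_tree_partition (n Δ t : ℕ) (hn : n ≠ 1) (hΔ : Δ ≠ 1)
    (ht1 : 1 ≤ t) (htn : t ≤ n)
    (T : SimpleGraph (Fin n)) (hT : T.IsTree) (r : Fin n)
    (hdeg : ∀ v, deg T v ≤ Δ) :
    ∃ (k : ℕ) (Vs : Fin k → Finset (Fin n)) (x : Fin k → Fin n),
      (∀ i j, i ≠ j → Disjoint (Vs i) (Vs j)) ∧
      (∀ i, x i ∈ Vs i) ∧
      (∀ i, (SimpleGraph.induce (↑(Vs i) : Set (Fin n)) T).Connected) ∧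
      (∀ i, ∀ v ∈ Vs i, ∀ p : T.Walk r v, p.IsPath → x i ∈ p.support) ∧
      (∀ i, t ≤ (Vs i).card ∧ (Vs i).card ≤ 2 * Δ * t) ∧
      (∀ v : Fin n, ∃ i, v ∈ Vs i) := by
  have hne : Nonempty (Fin n) := hT.isConnected.nonempty
  have hn1 : 1 ≤ n := by
    rcases hne with ⟨a⟩; exact Nat.one_le_iff_ne_zero.mpr (by rintro rfl; exact a.elim0)
  have hn2 : 2 ≤ n := by omega
  -- Δ ≥ 1
  have hΔ1 : 1 ≤ Δ := by
    obtain ⟨v, hvr⟩ := Fintype.exists_ne_of_one_lt_card (by simp; omega) r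
    obtain ⟨p, hp⟩ := exists_path hT r v
    rcases p with _ | ⟨hadj, q⟩
    · exact absurd rfl hvr.symm
    · have : 0 < deg T r := by
        rw [deg, Set.ncard_pos (Set.toFinite _)]
        exact ⟨_, hadj⟩
      exact le_trans this (hdeg r)
  have huniv : (Finset.univ : Finset (Fin n)).card = n := by simp
  obtain ⟨k, Vs, x, -, hdis, hx, hconn, hanc, hsize, hcov⟩ :=
    main_lemma hT r hΔ1 ht1 hdeg n Finset.univ (by omega)
      (fun w _ u _ => Finset.mem_univ u) (by omega)
  exact ⟨k, Vs, x, hdis, hx, hconn, hanc, hsize, fun v => hcov v (Finset.mem_univ v)⟩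


end ApproxDecomp
end

section
/- There exists C₀ ∈ ℕ such that for every integer C ≥ C₀ the following holds: with high probability (probability tending to 1 as n → ∞), the binomial random graph 𝐆(n, C/n) contains no (⌈C^{−1/3}n⌉, ⌈C^{−1/3}n⌉)-bipartite hole; consequently, with high probability, ᾶ(𝐆(n, C/n)) ≤ 2C^{−1/3}n, and hence for any graph G on the same vertex set, ᾶ(G ∪ 𝐆(n, C/n)) ≤ 2C^{−1/3}n with high probability. -/
open SimpleGraph

namespace ApproxDecomp

/-- An `(s,t)`-bipartite hole: two disjoint vertex sets of sizes `s`, `t`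
with no edges between them. -/
def HasBipartiteHole {V : Type*} (G : SimpleGraph V) (s t : ℕ) : Prop :=
  ∃ S T : Finset V, Disjoint S T ∧ S.card = s ∧ T.card = t ∧
    ∀ a ∈ S, ∀ b ∈ T, ¬ G.Adj a b

/-- The bi-independence number: the largest `r` such that `G` has an
`(s,t)`-bipartite hole for every `s + t = r`. -/
noncomputable def biIndep {V : Type*} (G : SimpleGraph V) : ℕ :=
  sSup {r : ℕ | ∀ s t : ℕ, s + t = r → HasBipartiteHole G s t}

/-- The set of potential edges (non-diagonal unordered pairs) on `Fin n`. -/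
def potentialEdges (n : ℕ) : Finset (Sym2 (Fin n)) :=
  Finset.univ.filter fun e : Sym2 (Fin n) => ¬ e.IsDiag

open scoped Classical in
/-- The probability that the binomial random graph `G(n,p)` on `Fin n`
satisfies the property `P`: each potential edge is included independently
with probability `p`. -/
noncomputable def binomialProb (n : ℕ) (p : ℝ) (P : SimpleGraph (Fin n) → Prop) : ℝ :=
  ∑ s ∈ (potentialEdges n).powerset,
    if P (SimpleGraph.fromEdgeSet (↑s)) then
      p ^ s.card * (1 - p) ^ ((potentialEdges n).card - s.card)
    else 0

lemma hole_mono {V : Type*} {G : SimpleGraph V} {s t s' t' : ℕ}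
    (h : HasBipartiteHole G s t) (hs : s' ≤ s) (ht : t' ≤ t) :
    HasBipartiteHole G s' t' := by
  obtain ⟨S, T, hST, hS, hT, hno⟩ := h
  obtain ⟨S', hS'sub, hS'⟩ := Finset.exists_subset_card_eq (hS ▸ hs)
  obtain ⟨T', hT'sub, hT'⟩ := Finset.exists_subset_card_eq (hT ▸ ht)
  exact ⟨S', T', hST.mono hS'sub hT'sub, hS', hT',
    fun a ha b hb => hno a (hS'sub ha) b (hT'sub hb)⟩

lemma hole_anti {V : Type*} {G H : SimpleGraph V} (hGH : G ≤ H) {s t : ℕ}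
    (h : HasBipartiteHole H s t) : HasBipartiteHole G s t := by
  obtain ⟨S, T, hST, hS, hT, hno⟩ := h
  exact ⟨S, T, hST, hS, hT, fun a ha b hb hadj => hno a ha b hb (hGH hadj)⟩

lemma biIndep_lt {V : Type*} {G H : SimpleGraph V} (hGH : G ≤ H) {m : ℕ}
    (h : ¬ HasBipartiteHole G m m) : biIndep H < 2 * m := by
  rcases Nat.eq_zero_or_pos m with hm | hm
  · exact absurd ⟨∅, ∅, disjoint_bot_left, by simp [hm], by simp [hm], by simp⟩ (hm ▸ h)
  have hb : ∀ r ∈ {r : ℕ | ∀ s t : ℕ, s + t = r → HasBipartiteHole H s t}, r ≤ 2 * m - 1 := by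
    intro r hr
    by_contra hc
    push_neg at hc
    have hrm : m + (r - m) = r := by omega
    have := hr m (r - m) hrm
    have hole := hole_anti hGH this
    exact h (hole_mono hole le_rfl (by omega))
  have h0 : ({r : ℕ | ∀ s t : ℕ, s + t = r → HasBipartiteHole H s t}).Nonempty := by
    refine ⟨0, fun s t hst => ?_⟩
    obtain ⟨hs, ht⟩ : s = 0 ∧ t = 0 := by omega
    exact ⟨∅, ∅, disjoint_bot_left, by simp [hs], by simp [ht], by simp⟩
  have := csSup_le h0 hb
  calc biIndep H ≤ 2 * m - 1 := this
    _ < 2 * m := by omega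

lemma sum_powerset_pow_mul {α : Type*} [DecidableEq α] (A : Finset α) (x y : ℝ) :
    ∑ s ∈ A.powerset, x ^ s.card * y ^ (A.card - s.card) = (x + y) ^ A.card := by
  rw [Finset.sum_powerset, add_pow]
  refine Finset.sum_congr rfl fun j hj => ?_
  have : ∀ t ∈ Finset.powersetCard j A,
      x ^ t.card * y ^ (A.card - t.card) = x ^ j * y ^ (A.card - j) := by
    intro t ht; rw [(Finset.mem_powersetCard.mp ht).2]
  rw [Finset.sum_congr rfl this, Finset.sum_const, Finset.card_powersetCard, nsmul_eq_mul]
  ring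

section Prob
variable {n : ℕ} {p : ℝ}

lemma weight_nonneg (hp0 : 0 ≤ p) (hp1 : p ≤ 1) (s : Finset (Sym2 (Fin n))) :
    0 ≤ p ^ s.card * (1 - p) ^ ((potentialEdges n).card - s.card) :=
  mul_nonneg (pow_nonneg hp0 _) (pow_nonneg (by linarith) _)

lemma binomialProb_mono (hp0 : 0 ≤ p) (hp1 : p ≤ 1) {P Q : SimpleGraph (Fin n) → Prop}
    (h : ∀ g, P g → Q g) : binomialProb n p P ≤ binomialProb n p Q := by
  classical
  unfold binomialProb
  refine Finset.sum_le_sum fun s hs => ?_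
  split_ifs with h1 h2
  · exact le_rfl
  · exact absurd (h _ h1) h2
  all_goals first
    | exact le_rfl
    | exact weight_nonneg hp0 hp1 s

lemma binomialProb_compl (hp0 : 0 ≤ p) (hp1 : p ≤ 1) (P : SimpleGraph (Fin n) → Prop) :
    binomialProb n p P + binomialProb n p (fun g => ¬ P g) = 1 := by
  classical
  unfold binomialProb
  rw [← Finset.sum_add_distrib]
  have step : ∑ s ∈ (potentialEdges n).powerset,
      p ^ s.card * (1 - p) ^ ((potentialEdges n).card - s.card) = 1 := by
    rw [sum_powerset_pow_mul]; simp
  refine Eq.trans (Finset.sum_congr rfl fun s hs => ?_) step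
  by_cases h : P (SimpleGraph.fromEdgeSet (↑s : Set (Sym2 (Fin n)))) <;> simp [h]

lemma prob_disjoint_edges (hp0 : 0 ≤ p) (hp1 : p ≤ 1) {E₀ : Finset (Sym2 (Fin n))}
    (hE : E₀ ⊆ potentialEdges n) :
    ∑ s ∈ (potentialEdges n).powerset,
      (if Disjoint E₀ s then p ^ s.card * (1 - p) ^ ((potentialEdges n).card - s.card) else 0)
      = (1 - p) ^ E₀.card := by
  classical
  rw [← Finset.sum_filter]
  have hfe : (potentialEdges n).powerset.filter (fun s => Disjoint E₀ s)
      = (potentialEdges n \ E₀).powerset := by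
    ext s
    simp only [Finset.mem_filter, Finset.mem_powerset, Finset.subset_sdiff]
    rw [disjoint_comm]
  rw [hfe]
  have hkey : ∀ s ∈ (potentialEdges n \ E₀).powerset,
      p ^ s.card * (1 - p) ^ ((potentialEdges n).card - s.card)
      = (1 - p) ^ E₀.card *
        (p ^ s.card * (1 - p) ^ ((potentialEdges n \ E₀).card - s.card)) := by
    intro s hs
    have h1 := Finset.card_sdiff_add_card_eq_card hE
    have h2 : s.card ≤ (potentialEdges n \ E₀).card :=
      Finset.card_le_card (Finset.mem_powerset.mp hs)
    have h3 : (potentialEdges n).card - s.card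
        = E₀.card + ((potentialEdges n \ E₀).card - s.card) := by omega
    rw [h3, pow_add]; ring
  rw [Finset.sum_congr rfl hkey, ← Finset.mul_sum, sum_powerset_pow_mul]
  simp

lemma choose_le_two_pow (n m : ℕ) : n.choose m ≤ 2 ^ n := by
  rcases le_or_gt m n with h | h
  · calc n.choose m ≤ ∑ k ∈ Finset.range (n + 1), n.choose k :=
        Finset.single_le_sum (fun k _ => Nat.zero_le _) (Finset.mem_range.mpr (by omega))
      _ = 2 ^ n := Nat.sum_range_choose n
  · rw [Nat.choose_eq_zero_of_lt h]; exact Nat.zero_le _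

lemma prob_hole_le (hp0 : 0 ≤ p) (hp1 : p ≤ 1) (m : ℕ) :
    binomialProb n p (fun g => HasBipartiteHole g m m) ≤ 4 ^ n * (1 - p) ^ (m * m) := by
  classical
  set M := potentialEdges n with hM
  set w : Finset (Sym2 (Fin n)) → ℝ :=
    fun s => p ^ s.card * (1 - p) ^ (M.card - s.card) with hw
  have hwnn : ∀ s : Finset (Sym2 (Fin n)), 0 ≤ w s := fun s => weight_nonneg hp0 hp1 s
  set Pairs : Finset (Finset (Fin n) × Finset (Fin n)) :=
    ((Finset.univ.powersetCard m) ×ˢ (Finset.univ.powersetCard m)).filter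
      (fun ST => Disjoint ST.1 ST.2) with hPairs
  set E : Finset (Fin n) × Finset (Fin n) → Finset (Sym2 (Fin n)) :=
    fun ST => (ST.1 ×ˢ ST.2).image (fun ab => s(ab.1, ab.2)) with hE
  have hEsub : ∀ ST ∈ Pairs, E ST ⊆ M := by
    intro ST hST
    obtain ⟨hmem, hd⟩ := Finset.mem_filter.mp hST
    intro e he
    obtain ⟨ab, hab, rfl⟩ := Finset.mem_image.mp he
    obtain ⟨ha, hb⟩ := Finset.mem_product.mp hab
    have hne : ab.1 ≠ ab.2 := fun hEq => Finset.disjoint_left.mp hd ha (hEq ▸ hb)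
    simp [hM, potentialEdges, Sym2.mk_isDiag_iff, hne]
  have hEcard : ∀ ST ∈ Pairs, (E ST).card = m * m := by
    intro ST hST
    obtain ⟨hmem, hd⟩ := Finset.mem_filter.mp hST
    obtain ⟨h1, h2⟩ := Finset.mem_product.mp hmem
    have hc1 : ST.1.card = m := (Finset.mem_powersetCard.mp h1).2
    have hc2 : ST.2.card = m := (Finset.mem_powersetCard.mp h2).2
    have hinj : Set.InjOn (fun ab : Fin n × Fin n => s(ab.1, ab.2))
        ↑(ST.1 ×ˢ ST.2) := by
      rintro ⟨a, b⟩ hab ⟨c, d⟩ hcd hEq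
      obtain ⟨ha, hb⟩ := Finset.mem_product.mp (Finset.mem_coe.mp hab)
      obtain ⟨hc, hd'⟩ := Finset.mem_product.mp (Finset.mem_coe.mp hcd)
      simp only [Sym2.eq_iff] at hEq
      rcases hEq with ⟨rfl, rfl⟩ | ⟨h1', h2'⟩
      · rfl
      · subst h1'; subst h2'
        exact absurd hd' (Finset.disjoint_left.mp hd ha)
    rw [hE]
    rw [Finset.card_image_of_injOn hinj, Finset.card_product, hc1, hc2]
  calc binomialProb n p (fun g => HasBipartiteHole g m m)
      ≤ ∑ s ∈ M.powerset, ∑ ST ∈ Pairs, (if Disjoint (E ST) s then w s else 0) := by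
        unfold binomialProb
        refine Finset.sum_le_sum fun s hs => ?_
        split_ifs with h
        · obtain ⟨S, T, hd, hS, hT, hno⟩ := h
          have hSTmem : (S, T) ∈ Pairs := by
            refine Finset.mem_filter.mpr ⟨Finset.mem_product.mpr ⟨?_, ?_⟩, hd⟩
            · exact Finset.mem_powersetCard.mpr ⟨Finset.subset_univ _, hS⟩
            · exact Finset.mem_powersetCard.mpr ⟨Finset.subset_univ _, hT⟩
          have hdisj : Disjoint (E (S, T)) s := by
            rw [Finset.disjoint_left]
            intro e he hes
            obtain ⟨ab, hab, rfl⟩ := Finset.mem_image.mp he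
            obtain ⟨ha, hb⟩ := Finset.mem_product.mp hab
            have hne : ab.1 ≠ ab.2 := fun hEq => Finset.disjoint_left.mp hd ha (hEq ▸ hb)
            exact hno ab.1 ha ab.2 hb ((SimpleGraph.fromEdgeSet_adj _).mpr ⟨hes, hne⟩)
          have hle := Finset.single_le_sum
            (f := fun ST => if Disjoint (E ST) s then w s else 0)
            (fun ST _ => by split_ifs; exacts [hwnn s, le_rfl]) hSTmem
          rw [if_pos hdisj] at hle
          exact hle
        · exact Finset.sum_nonneg fun ST _ => by split_ifs; exacts [hwnn s, le_rfl]
    _ = ∑ ST ∈ Pairs, ∑ s ∈ M.powerset, (if Disjoint (E ST) s then w s else 0) :=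
        Finset.sum_comm
    _ = ∑ ST ∈ Pairs, (1 - p) ^ (m * m) := by
        refine Finset.sum_congr rfl fun ST hST => ?_
        rw [← hEcard ST hST]
        exact prob_disjoint_edges hp0 hp1 (hEsub ST hST)
    _ = Pairs.card * (1 - p) ^ (m * m) := by rw [Finset.sum_const, nsmul_eq_mul]
    _ ≤ 4 ^ n * (1 - p) ^ (m * m) := by
        refine mul_le_mul_of_nonneg_right ?_ (pow_nonneg (by linarith) _)
        have h1 : Pairs.card ≤ (n.choose m) * (n.choose m) := by
          calc Pairs.card ≤ ((Finset.univ.powersetCard m (α := Fin n)) ×ˢ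
              (Finset.univ.powersetCard m)).card := Finset.card_filter_le _ _
            _ = (n.choose m) * (n.choose m) := by
                simp [Finset.card_powersetCard]
        have h2 : (n.choose m) * (n.choose m) ≤ 4 ^ n := by
          calc (n.choose m) * (n.choose m) ≤ 2 ^ n * 2 ^ n :=
              Nat.mul_le_mul (choose_le_two_pow n m) (choose_le_two_pow n m)
            _ = 4 ^ n := by rw [← Nat.mul_pow]
        calc (Pairs.card : ℝ) ≤ ((n.choose m) * (n.choose m) : ℕ) := by exact_mod_cast h1
          _ ≤ ((4 ^ n : ℕ) : ℝ) := by exact_mod_cast h2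
          _ = 4 ^ n := by push_cast; ring

end Prob


set_option maxHeartbeats 2000000 in
/-- For large constants `C`, whp `G(n, C/n)` has no
`(⌈C^{-1/3}n⌉, ⌈C^{-1/3}n⌉)`-bipartite hole; consequently its bi-independence
number is at most `2C^{-1/3}n`, and so is that of `G ∪ G(n, C/n)` for any
graph `G` on the same vertex set. -/
theorem random_graph_no_bipartite_hole :
    ∃ C₀ : ℕ, ∀ C : ℕ, C₀ ≤ C →
      ∀ εP : ℝ, 0 < εP →
      ∃ n₀ : ℕ, ∀ n : ℕ, n₀ ≤ n →
        1 - εP ≤ binomialProb n ((C : ℝ) / n) (fun g =>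
          ¬ HasBipartiteHole g ⌈(C : ℝ) ^ (-(1 : ℝ)/3) * n⌉₊ ⌈(C : ℝ) ^ (-(1 : ℝ)/3) * n⌉₊ ∧
          (biIndep g : ℝ) ≤ 2 * (C : ℝ) ^ (-(1 : ℝ)/3) * n ∧
          ∀ G : SimpleGraph (Fin n),
            (biIndep (G ⊔ g) : ℝ) ≤ 2 * (C : ℝ) ^ (-(1 : ℝ)/3) * n) := by
  refine ⟨64, fun C hC εP hε => ?_⟩
  -- basic facts about c = C^(-1/3)
  set c : ℝ := (C : ℝ) ^ (-(1 : ℝ)/3) with hc_def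
  have hC0 : (0:ℝ) < C := by
    have : (64:ℝ) ≤ C := by exact_mod_cast hC
    linarith
  have hc_pos : 0 < c := Real.rpow_pos_of_pos hC0 _
  have hc3 : c * (c * c) = ((C:ℝ))⁻¹ := by
    have h3 : c ^ (3:ℕ) = ((C:ℝ))⁻¹ := by
      rw [hc_def, ← Real.rpow_natCast ((C:ℝ) ^ (-(1:ℝ)/3)) 3, ← Real.rpow_mul hC0.le]
      norm_num
      rw [Real.rpow_neg_one]
    calc c * (c * c) = c ^ (3:ℕ) := by ring
      _ = _ := h3
  clear_value c
  have hc3' : (C:ℝ) * (c * (c * c)) = 1 := by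
    rw [hc3]; field_simp
  have hC64 : (64:ℝ) ≤ C := by exact_mod_cast hC
  have hc_quarter : c ≤ 1/4 := by
    by_contra h
    push_neg at h
    have h2 : (1:ℝ)/16 < c * c := by nlinarith
    have h3 : (1:ℝ)/64 < c * (c * c) := by nlinarith
    nlinarith
  have hCc : 1 ≤ (C:ℝ) * c := by
    by_contra h
    push_neg at h
    have h0 : 0 < (C:ℝ) * c := by positivity
    have h2 : ((C:ℝ)*c)*(((C:ℝ)*c)*((C:ℝ)*c)) < 1 := by nlinarith
    have h3 : ((C:ℝ)*c)*(((C:ℝ)*c)*((C:ℝ)*c)) = (C:ℝ)*(C:ℝ) := by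
      calc ((C:ℝ)*c)*(((C:ℝ)*c)*((C:ℝ)*c)) = ((C:ℝ)*(C:ℝ)) * ((C:ℝ)*(c*(c*c))) := by ring
        _ = (C:ℝ)*(C:ℝ) := by rw [hc3']; ring
    nlinarith
  have hCcc : (C:ℝ) * (c * c) = c⁻¹ := by
    refine eq_inv_of_mul_eq_one_left ?_
    calc (C:ℝ) * (c * c) * c = (C:ℝ) * (c * (c * c)) := by ring
      _ = 1 := hc3'
  have hfour : 4 ≤ c⁻¹ := by
    rw [le_inv_comm₀ (by norm_num) hc_pos]
    linarith
  -- geometric ratio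
  set r : ℝ := 4 * Real.exp (-2) with hr_def
  have hr0 : 0 ≤ r := by rw [hr_def]; positivity
  have hr1 : r < 1 := by
    have h := Real.exp_one_gt_d9
    have h2 : Real.exp 2 = Real.exp 1 * Real.exp 1 := by rw [← Real.exp_add]; norm_num
    have h4 : (4:ℝ) < Real.exp 2 := by nlinarith
    have hinv : Real.exp (-2) = (Real.exp 2)⁻¹ := by rw [← Real.exp_neg]
    rw [hr_def, hinv, mul_inv_lt_iff₀' (by positivity)]
    linarith
  clear_value r
  -- choose n₀
  obtain ⟨n₁, hn₁⟩ := Filter.eventually_atTop.mp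
    ((tendsto_pow_atTop_nhds_zero_of_lt_one hr0 hr1).eventually (gt_mem_nhds hε))
  refine ⟨max n₁ (4 * C), fun n hn => ?_⟩
  have hn1 : n₁ ≤ n := le_trans (le_max_left _ _) hn
  have hn4C : 4 * C ≤ n := le_trans (le_max_right _ _) hn
  have hn4CR : (4:ℝ) * C ≤ n := by exact_mod_cast hn4C
  have hnpos : (0:ℝ) < n := by linarith
  set p : ℝ := (C : ℝ) / n with hp_def
  have hp0 : 0 ≤ p := by rw [hp_def]; positivity
  have hp1 : p ≤ 1 := by
    rw [hp_def, div_le_one hnpos]; linarith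
  clear_value p
  set x : ℝ := c * n with hx_def
  have hx4 : 4 ≤ x := by
    rw [hx_def]
    calc (4:ℝ) = 4 * 1 := by ring
      _ ≤ 4 * ((C:ℝ) * c) := by linarith
      _ ≤ c * n := by nlinarith [hc_pos]
  have hx0 : 0 ≤ x := by linarith
  set m : ℕ := ⌊x⌋₊ with hm_def
  have hm_low : x - 1 ≤ (m:ℝ) := by
    have := Nat.lt_floor_add_one x
    rw [hm_def]
    linarith
  have hm_up : (m:ℝ) ≤ x := by
    rw [hm_def]; exact Nat.floor_le hx0
  have hmceil : m ≤ ⌈x⌉₊ := by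
    rw [hm_def]; exact Nat.floor_le_ceil _
  clear_value m
  clear_value x
  -- probability of a hole is small
  have hprob : binomialProb n p (fun g => HasBipartiteHole g m m) ≤ εP := by
    have h1 := prob_hole_le (n := n) hp0 hp1 m
    have h2 : (1 - p) ^ (m * m) ≤ Real.exp (-(2 * n)) := by
      calc (1 - p) ^ (m * m) ≤ (Real.exp (-p)) ^ (m * m) := by
            refine pow_le_pow_left₀ (by linarith) ?_ _
            have := Real.add_one_le_exp (-p)
            linarith
        _ = Real.exp (-(p * ((m:ℝ) * m))) := by
            rw [← Real.exp_nat_mul]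
            congr 1
            push_cast
            ring
        _ ≤ Real.exp (-(2 * n)) := by
            rw [Real.exp_le_exp]
            have hmm : (x - 1) ^ 2 ≤ ((m:ℝ)) * m := by nlinarith
            have hx2 : x ^ 2 / 2 ≤ (x - 1) ^ 2 := by nlinarith
            have hcx : p * (x ^ 2 / 2) = c⁻¹ * n / 2 := by
              rw [hp_def, hx_def, ← hCcc]
              field_simp
            have hnn : 2 * (n:ℝ) ≤ c⁻¹ * n / 2 := by nlinarith
            have hkey : 2 * (n:ℝ) ≤ p * ((m:ℝ) * m) := by
              calc 2 * (n:ℝ) ≤ c⁻¹ * n / 2 := hnn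
                _ = p * (x ^ 2 / 2) := hcx.symm
                _ ≤ p * ((x - 1) ^ 2) := by nlinarith
                _ ≤ p * ((m:ℝ) * m) := by nlinarith
            linarith
    calc binomialProb n p (fun g => HasBipartiteHole g m m)
        ≤ 4 ^ n * (1 - p) ^ (m * m) := h1
      _ ≤ 4 ^ n * Real.exp (-(2 * n)) :=
          mul_le_mul_of_nonneg_left h2 (by positivity)
      _ = r ^ n := by
          rw [hr_def, mul_pow, ← Real.exp_nat_mul]
          congr 2
          ring
      _ ≤ εP := (hn₁ n hn1).le
  -- the good event follows from having no (m,m)-hole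
  have hmono : ∀ g : SimpleGraph (Fin n), ¬ HasBipartiteHole g m m →
      (¬ HasBipartiteHole g ⌈x⌉₊ ⌈x⌉₊ ∧
      (biIndep g : ℝ) ≤ 2 * c * n ∧
      ∀ G : SimpleGraph (Fin n), (biIndep (G ⊔ g) : ℝ) ≤ 2 * c * n) := by
    intro g hg
    have hbound : ∀ H : SimpleGraph (Fin n), g ≤ H → (biIndep H : ℝ) ≤ 2 * c * n := by
      intro H hH
      have hlt := biIndep_lt hH hg
      have h1 : (biIndep H : ℝ) + 1 ≤ 2 * m := by exact_mod_cast hlt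
      have hmx : (m:ℝ) ≤ c * n := by rw [← hx_def]; exact hm_up
      linarith
    exact ⟨fun h => hg (hole_mono h hmceil hmceil), hbound g le_rfl,
      fun G => hbound (G ⊔ g) le_sup_right⟩
  have hcompl := binomialProb_compl (n := n) hp0 hp1 (fun g => HasBipartiteHole g m m)
  have hmono2 := binomialProb_mono (n := n) hp0 hp1 hmono
  calc 1 - εP ≤ binomialProb n p (fun g => ¬ HasBipartiteHole g m m) := by linarith
    _ ≤ _ := hmono2


end ApproxDecomp
end
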